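/- If x_t → x_∞, ∇L is continuous, ‖Δ_t‖ ≤ 1, ⟨∇L(x_{t−1}), Δ_t⟩ = ‖∇L(x_{t−1})‖_* for all t, Σ η_t = ∞, and the weighted average Δ_∞ = lim_T (Σ_{t=1}^T η_t Δ_t)/(Σ_{t=1}^T η_t) exists, then ⟨∇L(x_∞), Δ_∞⟩ = ‖∇L(x_∞)‖_* and ‖Δ_∞‖ ≤ 1. -/

import Mathlib

open scoped RealInnerProductSpace BigOperators
open Filter Finset

/-- `N` is a norm on `ℝ^d`. -/
def IsNorm {d : ℕ} (N : EuclideanSpace ℝ (Fin d) → ℝ) : Prop :=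
  (∀ x, N x = 0 ↔ x = 0) ∧ (∀ (c : ℝ) (x), N (c • x) = |c| * N x) ∧
    (∀ x y, N (x + y) ≤ N x + N y)

/-- `D` is the dual norm of `N`: `D g` is the maximum of `⟪g, x⟫` over the unit ball of `N`
(the supremum is attained in finite dimension). -/
def IsDualNorm {d : ℕ} (N D : EuclideanSpace ℝ (Fin d) → ℝ) : Prop :=
  ∀ g, IsGreatest {r : ℝ | ∃ x, N x ≤ 1 ∧ r = ⟪g, x⟫} (D g)

/-- `g` is a subgradient of the convex function `f` at `x`. -/
def SubgradientAt {d : ℕ} (f : EuclideanSpace ℝ (Fin d) → ℝ)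
    (x g : EuclideanSpace ℝ (Fin d)) : Prop :=
  ∀ y, f x + ⟪y - x, g⟫ ≤ f y

section Aux
variable {d : ℕ}

/-- Any seminorm on a Euclidean space is continuous. -/
lemma aux_seminorm_continuous (p : Seminorm ℝ (EuclideanSpace ℝ (Fin d))) :
    Continuous p := by
  have h := p.convexOn.continuousOn isOpen_univ
  rwa [continuousOn_univ] at h

lemma aux_seminorm_sum_le {ι : Type*} (p : Seminorm ℝ (EuclideanSpace ℝ (Fin d)))
    (s : Finset ι) (f : ι → EuclideanSpace ℝ (Fin d)) :
    p (∑ i ∈ s, f i) ≤ ∑ i ∈ s, p (f i) := by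
  classical
  induction s using Finset.cons_induction with
  | empty => simp
  | cons a s ha ih =>
    rw [Finset.sum_cons, Finset.sum_cons]
    exact (map_add_le_add p _ _).trans (by linarith)

/-- The `N`-seminorm. -/
noncomputable def auxP (N : EuclideanSpace ℝ (Fin d) → ℝ) (hN : IsNorm N) :
    Seminorm ℝ (EuclideanSpace ℝ (Fin d)) :=
  Seminorm.of N hN.2.2 (fun c x => by rw [hN.2.1 c x, Real.norm_eq_abs])

@[simp] lemma auxP_apply (N : EuclideanSpace ℝ (Fin d) → ℝ) (hN : IsNorm N) (x) :
    auxP N hN x = N x := rfl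

/-- The dual function `D` is a seminorm. -/
noncomputable def auxQ (N D : EuclideanSpace ℝ (Fin d) → ℝ) (hN : IsNorm N)
    (hD : IsDualNorm N D) : Seminorm ℝ (EuclideanSpace ℝ (Fin d)) := by
  have hNneg : ∀ x, N (-x) = N x := fun x => by
    have := hN.2.1 (-1) x; simpa using this
  have hub : ∀ g x, N x ≤ 1 → ⟪g, x⟫ ≤ D g := by
    intro g x hx
    exact (hD g).2 ⟨x, hx, rfl⟩
  refine Seminorm.of D ?_ ?_
  · intro g h
    obtain ⟨x, hx, hval⟩ := (hD (g + h)).1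
    rw [hval, inner_add_left]
    exact add_le_add (hub g x hx) (hub h x hx)
  · intro c g
    rw [Real.norm_eq_abs]
    rcases eq_or_ne c 0 with rfl | hc
    · simp only [zero_smul, abs_zero, zero_mul]
      obtain ⟨x, hx, hval⟩ := (hD 0).1
      rw [hval]; simp
    · apply le_antisymm
      · obtain ⟨x, hx, hval⟩ := (hD (c • g)).1
        rw [hval, real_inner_smul_left]
        rcases le_or_gt 0 c with h0 | h0
        · rw [abs_of_nonneg h0]
          exact mul_le_mul_of_nonneg_left (hub g x hx) h0
        · have : c * ⟪g, x⟫ = |c| * ⟪g, -x⟫ := by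
            rw [inner_neg_right, abs_of_neg h0]; ring
          rw [this]
          exact mul_le_mul_of_nonneg_left (hub g (-x) (by rw [hNneg]; exact hx))
            (abs_nonneg c)
      · obtain ⟨y, hy, hval⟩ := (hD g).1
        rw [hval]
        have hsy : N ((if 0 ≤ c then (1:ℝ) else -1) • y) ≤ 1 := by
          split_ifs <;> simpa [hNneg]
        have := hub (c • g) ((if 0 ≤ c then (1:ℝ) else -1) • y) hsy
        rw [real_inner_smul_left, real_inner_smul_right] at this
        rcases le_or_gt 0 c with h0 | h0
        · rw [abs_of_nonneg h0]
          simpa [h0] using this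
        · rw [abs_of_neg h0]
          have h1 : ¬ (0 ≤ c) := not_le.mpr h0
          simp only [h1, if_false] at this
          linarith

@[simp] lemma auxQ_apply (N D : EuclideanSpace ℝ (Fin d) → ℝ) (hN : IsNorm N)
    (hD : IsDualNorm N D) (g) : auxQ N D hN hD g = D g := rfl

/-- Weighted Cesàro averages of a convergent sequence converge to the same limit. -/
lemma aux_weighted_cesaro (η : ℕ → ℝ) (hη : ∀ t, 1 ≤ t → 0 < η t)
    (hdiv : Tendsto (fun T => ∑ t ∈ Finset.Icc 1 T, η t) atTop atTop)
    (c : ℕ → ℝ) (l : ℝ) (hc : Tendsto c atTop (nhds l)) :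
    Tendsto (fun T => (∑ t ∈ Finset.Icc 1 T, η t)⁻¹ * ∑ t ∈ Finset.Icc 1 T, η t * c t)
      atTop (nhds l) := by
  have hre : ∀ (u : ℕ → ℝ) (T : ℕ),
      ∑ t ∈ Finset.Icc 1 T, u t = ∑ i ∈ Finset.range T, u (i + 1) := by
    intro u T
    rw [← Finset.Ico_add_one_right_eq_Icc, Finset.sum_Ico_eq_sum_range]
    simp [Nat.add_comm]
  set g' : ℕ → ℝ := fun n => η (n + 1) with hg'
  set f' : ℕ → ℝ := fun n => η (n + 1) * (c (n + 1) - l) with hf'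
  have hg'0 : ∀ n, 0 ≤ g' n := fun n => (hη (n + 1) (Nat.le_add_left _ _)).le
  have hG' : Tendsto (fun n => ∑ i ∈ Finset.range n, g' i) atTop atTop := by
    refine hdiv.congr fun T => ?_
    exact hre η T
  have hc1 : Tendsto (fun n => c (n + 1) - l) atTop (nhds 0) := by
    have := (hc.comp (tendsto_add_atTop_nat 1)).sub_const l
    simpa using this
  have hfo : f' =o[atTop] g' := by
    have h1 : (fun n => c (n + 1) - l) =o[atTop] (fun _ => (1 : ℝ)) :=
      (Asymptotics.isLittleO_one_iff ℝ).2 hc1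
    have := (Asymptotics.isBigO_refl g' atTop).mul_isLittleO h1
    simpa [hf', mul_comm] using this
  have hkey := (hfo.sum_range hg'0 hG').tendsto_div_nhds_zero
  have hS : ∀ᶠ T in atTop, 0 < ∑ t ∈ Finset.Icc 1 T, η t := by
    filter_upwards [eventually_ge_atTop 1] with T hT
    exact Finset.sum_pos (fun t ht => hη t (Finset.mem_Icc.1 ht).1)
      ⟨1, Finset.mem_Icc.mpr ⟨le_refl 1, hT⟩⟩
  have : Tendsto (fun T => (∑ i ∈ Finset.range T, f' i) / (∑ i ∈ Finset.range T, g' i) + l)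
      atTop (nhds l) := by
    simpa using hkey.add_const l
  refine this.congr' ?_
  filter_upwards [hS] with T hT
  have hSne : (∑ t ∈ Finset.Icc 1 T, η t) ≠ 0 := ne_of_gt hT
  have h1 : ∑ i ∈ Finset.range T, g' i = ∑ t ∈ Finset.Icc 1 T, η t := (hre η T).symm
  have h2 : ∑ i ∈ Finset.range T, f' i
      = ∑ t ∈ Finset.Icc 1 T, η t * c t - l * ∑ t ∈ Finset.Icc 1 T, η t := by
    rw [hre (fun t => η t * c t) T, hre η T, Finset.mul_sum, ← Finset.sum_sub_distrib]
    exact Finset.sum_congr rfl fun i _ => by ring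
  rw [h1, h2]
  field_simp
  ring
end Aux

/-- if `x_t → x_∞`, `∇L` is continuous, `N Δ_t ≤ 1`,
`⟪∇L(x_{t-1}), Δ_t⟫ = ‖∇L(x_{t-1})‖_*` for all `t ≥ 1`, `Σ η_t = ∞`, and the weighted
average `Δ_∞` of the updates exists, then `⟪∇L(x_∞), Δ_∞⟫ = ‖∇L(x_∞)‖_*` and `N Δ_∞ ≤ 1`. -/
theorem limit_update_properties {d : ℕ} (N D : EuclideanSpace ℝ (Fin d) → ℝ)
    (hN : IsNorm N) (hD : IsDualNorm N D)
    (L : EuclideanSpace ℝ (Fin d) → ℝ) (G : EuclideanSpace ℝ (Fin d) → EuclideanSpace ℝ (Fin d))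
    (hG : ∀ y, HasGradientAt L (G y) y) (hGcont : Continuous G)
    (η : ℕ → ℝ) (hη : ∀ t, 1 ≤ t → 0 < η t)
    (hdiv : Filter.Tendsto (fun T => ∑ t ∈ Finset.Icc 1 T, η t) Filter.atTop Filter.atTop)
    (x Δ : ℕ → EuclideanSpace ℝ (Fin d)) (xinf Δinf : EuclideanSpace ℝ (Fin d))
    (hxconv : Filter.Tendsto x Filter.atTop (nhds xinf))
    (hΔnorm : ∀ t, 1 ≤ t → N (Δ t) ≤ 1)
    (hΔsd : ∀ t, 1 ≤ t → ⟪G (x (t - 1)), Δ t⟫ = D (G (x (t - 1))))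
    (hΔconv : Filter.Tendsto
      (fun T => (∑ t ∈ Finset.Icc 1 T, η t)⁻¹ • ∑ t ∈ Finset.Icc 1 T, η t • Δ t)
      Filter.atTop (nhds Δinf)) :
    ⟪G xinf, Δinf⟫ = D (G xinf) ∧ N Δinf ≤ 1 := by
  classical
  set p := auxP N hN with hp
  set q := auxQ N D hN hD with hq
  have hub : ∀ g y, N y ≤ 1 → ⟪g, y⟫ ≤ D g := fun g y hy => (hD g).2 ⟨y, hy, rfl⟩
  have hNneg : ∀ y, N (-y) = N y := fun y => by have := hN.2.1 (-1) y; simpa using this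
  have habs : ∀ (v : EuclideanSpace ℝ (Fin d)) t, 1 ≤ t → |⟪v, Δ t⟫| ≤ D v := by
    intro v t ht
    rw [abs_le]
    constructor
    · have := hub (-v) (Δ t) (hΔnorm t ht)
      rw [inner_neg_left] at this
      have hDneg : D (-v) = D v := map_neg_eq_map q v
      linarith [hDneg ▸ this]
    · exact hub v (Δ t) (hΔnorm t ht)
  -- Part 2: N Δinf ≤ 1
  have hNcont : Continuous N := aux_seminorm_continuous p
  have h2 : N Δinf ≤ 1 := by
    have hlim : Tendsto
        (fun T => N ((∑ t ∈ Finset.Icc 1 T, η t)⁻¹ • ∑ t ∈ Finset.Icc 1 T, η t • Δ t))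
        atTop (nhds (N Δinf)) := (hNcont.tendsto Δinf).comp hΔconv
    refine le_of_tendsto hlim ?_
    filter_upwards [eventually_ge_atTop 1] with T hT
    have hS : 0 < ∑ t ∈ Finset.Icc 1 T, η t :=
      Finset.sum_pos (fun t ht => hη t (Finset.mem_Icc.1 ht).1)
        ⟨1, Finset.mem_Icc.mpr ⟨le_refl 1, hT⟩⟩
    have h1 : N ((∑ t ∈ Finset.Icc 1 T, η t)⁻¹ • ∑ t ∈ Finset.Icc 1 T, η t • Δ t)
        = (∑ t ∈ Finset.Icc 1 T, η t)⁻¹ * N (∑ t ∈ Finset.Icc 1 T, η t • Δ t) := by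
      rw [hN.2.1, abs_of_pos (inv_pos.mpr hS)]
    have h3 : N (∑ t ∈ Finset.Icc 1 T, η t • Δ t) ≤ ∑ t ∈ Finset.Icc 1 T, η t := by
      refine le_trans (aux_seminorm_sum_le p _ _) ?_
      refine Finset.sum_le_sum fun t ht => ?_
      have ht1 := (Finset.mem_Icc.1 ht).1
      have : p (η t • Δ t) = |η t| * N (Δ t) := by
        rw [auxP_apply, hN.2.1]
      rw [show (p (η t • Δ t) : ℝ) = |η t| * N (Δ t) from this,
        abs_of_pos (hη t ht1)]
      calc η t * N (Δ t) ≤ η t * 1 :=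
            mul_le_mul_of_nonneg_left (hΔnorm t ht1) (hη t ht1).le
        _ = η t := mul_one _
    rw [h1]
    calc (∑ t ∈ Finset.Icc 1 T, η t)⁻¹ * N (∑ t ∈ Finset.Icc 1 T, η t • Δ t)
        ≤ (∑ t ∈ Finset.Icc 1 T, η t)⁻¹ * ∑ t ∈ Finset.Icc 1 T, η t :=
          mul_le_mul_of_nonneg_left h3 (inv_pos.mpr hS).le
      _ = 1 := inv_mul_cancel₀ (ne_of_gt hS)
  refine ⟨?_, h2⟩
  -- Part 1
  have hDcont : Continuous D := aux_seminorm_continuous q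
  have hx' : Tendsto (fun t => x (t - 1)) atTop (nhds xinf) :=
    hxconv.comp (tendsto_sub_atTop_nat 1)
  have hGx : Tendsto (fun t => G (x (t - 1))) atTop (nhds (G xinf)) :=
    (hGcont.tendsto xinf).comp hx'
  have hDt : Tendsto (fun t => D (G (x (t - 1)))) atTop (nhds (D (G xinf))) :=
    (hDcont.tendsto (G xinf)).comp hGx
  have hqz : Tendsto (fun t => D (G xinf - G (x (t - 1)))) atTop (nhds 0) := by
    have h0 : Tendsto (fun t => G xinf - G (x (t - 1))) atTop (nhds 0) := by
      have := (tendsto_const_nhds (x := G xinf)).sub hGx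
      simpa using this
    have := (hDcont.tendsto 0).comp h0
    have hD0 : D 0 = 0 := map_zero q
    rwa [hD0] at this
  have herr : Tendsto (fun t => ⟪G xinf, Δ t⟫ - D (G (x (t - 1)))) atTop (nhds 0) := by
    refine squeeze_zero_norm' (a := fun t => D (G xinf - G (x (t - 1)))) ?_ hqz
    filter_upwards [eventually_ge_atTop 1] with t ht
    have heq : ⟪G xinf, Δ t⟫ - D (G (x (t - 1)))
        = ⟪G xinf - G (x (t - 1)), Δ t⟫ := by
      rw [inner_sub_left, hΔsd t ht]
    rw [Real.norm_eq_abs, heq]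
    exact habs _ t ht
  have hc : Tendsto (fun t => ⟪G xinf, Δ t⟫) atTop (nhds (D (G xinf))) := by
    have := hDt.add herr
    simpa using this
  have hlim := aux_weighted_cesaro η hη hdiv _ _ hc
  have hinner : Tendsto
      (fun T => ⟪G xinf, (∑ t ∈ Finset.Icc 1 T, η t)⁻¹ • ∑ t ∈ Finset.Icc 1 T, η t • Δ t⟫)
      atTop (nhds ⟪G xinf, Δinf⟫) :=
    Filter.Tendsto.inner tendsto_const_nhds hΔconv
  have heq2 : ∀ T, ⟪G xinf, (∑ t ∈ Finset.Icc 1 T, η t)⁻¹ • ∑ t ∈ Finset.Icc 1 T, η t • Δ t⟫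
      = (∑ t ∈ Finset.Icc 1 T, η t)⁻¹ * ∑ t ∈ Finset.Icc 1 T, η t * ⟪G xinf, Δ t⟫ := by
    intro T
    rw [real_inner_smul_right, inner_sum]
    congr 1
    exact Finset.sum_congr rfl fun t _ => real_inner_smul_right _ _ _
  exact tendsto_nhds_unique (hinner.congr fun T => heq2 T) hlim
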